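/- Counting lower bound for k-Center on a star: Let the star have m−1 rays of length d and one ray of length 4kd−d, with m = (kd)³. The number of request sequences of length n with k-Center cost at most (2d/3)·n is at most (6kd)ⁿ·(3md)^{n/3}, while the number of sequences with cost at most 18n for the center-anchored algorithm A is at least ((kd)³)ⁿ... consequently for large d there are strictly more A-cheap sequences than k-Center-cheap sequences, so k-Center's bijective ratio against A is Ω(d). -/

import Mathlib

open scoped Classical

private lemma exists_mem_not_mem_aux {α : Type*} [DecidableEq α] {s t : Finset α}
    (h : s.card < t.card) : ∃ a ∈ t, a ∉ s := by
  by_contra hc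
  push_neg at hc
  exact absurd (Finset.card_le_card hc) (by omega)

/-- Counting lower bound for k-Center on the star (Theorem
`kctr.sucks.stars`): requests are grid points of the star (abstracted as a
finite type `P`); `cK p` (resp. `cA p`) is the fixed cost for k-Center
(resp. for the centre-anchored algorithm `A`) to serve a request at `p`,
and the cost of a sequence is the sum of its per-request costs. With
`m = (kd)³`, if k-Center has at most `2kd + k` points of cost at most `2d`
and at most `md + 2kd` points of larger cost, while `A` has at least
`m = (kd)³` points of cost at most `18` (taking `c = 9`), then for all
sufficiently large `d`: the number of sequences of length `n` that cost
k-Center at most `(2d/3)·n` is at most `(6kd)ⁿ·(3md)^{n/3}`; the number of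
sequences costing `A` at most `18·n` is at least `mⁿ = ((kd)³)ⁿ`; strictly
fewer sequences are k-Center-cheap than `A`-cheap; and hence under every
bijection some sequence witnesses a ratio of at least `d/27 = Ω(d)`. -/
theorem kcenter_star_counting_lower_bound (k : ℕ) (hk : 1 ≤ k) :
    ∃ D : ℕ, ∀ d : ℕ, D ≤ d →
    ∀ (P : Type) [Fintype P] (cK cA : P → ℝ),
    (∀ p, 0 ≤ cK p) → (∀ p, 0 ≤ cA p) →
    (Finset.univ.filter (fun p => cK p ≤ 2 * d)).card ≤ 2 * k * d + k →
    (Finset.univ.filter (fun p => ¬ cK p ≤ 2 * d)).card ≤ (k * d) ^ 3 * d + 2 * k * d →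
    (k * d) ^ 3 ≤ (Finset.univ.filter (fun p => cA p ≤ 18)).card →
    ∀ n : ℕ, 1 ≤ n →
      (((Finset.univ.filter
          (fun σ : Fin n → P => ∑ i, cK (σ i) ≤ (2 * (d : ℝ) / 3) * n)).card : ℝ)
        ≤ (6 * k * d : ℝ) ^ n * ((3 * ((k * d : ℕ) ^ 3) * d : ℝ)) ^ ((n : ℝ) / 3))
      ∧ ((k * d) ^ 3) ^ n
          ≤ (Finset.univ.filter
              (fun σ : Fin n → P => ∑ i, cA (σ i) ≤ 18 * n)).card
      ∧ (Finset.univ.filter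
            (fun σ : Fin n → P => ∑ i, cK (σ i) < (2 * (d : ℝ) / 3) * n)).card
          < (Finset.univ.filter
              (fun σ : Fin n → P => ∑ i, cA (σ i) ≤ 18 * n)).card
      ∧ ∀ π : (Fin n → P) ≃ (Fin n → P), ∃ σ : Fin n → P,
          ((d : ℝ) / 27) * (∑ i, cA (π σ i)) ≤ ∑ i, cK (σ i) := by
  refine ⟨26, fun d hd P _ cK cA hcK hcA hG hB hA n hn => ?_⟩
  have hd1 : 1 ≤ d := by omega
  have hd0 : 0 < d := hd1
  have hkd1 : 1 ≤ k * d := Nat.one_le_iff_ne_zero.mpr (by positivity)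
  set G : Finset P := Finset.univ.filter (fun p => cK p ≤ 2 * d) with hGdef
  set B : Finset P := Finset.univ.filter (fun p => ¬ cK p ≤ 2 * d) with hBdef
  set a : ℕ := 3 * k * d with ha
  set b : ℕ := 3 * (k * d) ^ 3 * d with hb
  have hGa : G.card ≤ a := by
    have h1 : k ≤ k * d := Nat.le_mul_of_pos_right k hd0
    have : 2 * k * d + k ≤ 3 * k * d := by nlinarith
    exact le_trans hG this
  have hBb : B.card ≤ b := by
    have h1 : k * d ≤ (k * d) ^ 3 := Nat.le_self_pow (by norm_num) _
    have h2 : (k * d) ^ 3 ≤ (k * d) ^ 3 * d := Nat.le_mul_of_pos_right _ hd0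
    have : (k * d) ^ 3 * d + 2 * k * d ≤ 3 * (k * d) ^ 3 * d := by nlinarith
    exact le_trans hB this
  have ha1 : 1 ≤ a := by
    rw [ha]; nlinarith [hkd1]
  have hb1 : 1 ≤ b := by
    rw [hb]
    have : 1 ≤ (k * d) ^ 3 := Nat.one_le_pow _ _ hkd1
    nlinarith
  have hb1R : (1 : ℝ) ≤ (b : ℝ) := by exact_mod_cast hb1
  have ha1R : (1 : ℝ) ≤ (a : ℝ) := by exact_mod_cast ha1
  -- the fiber map
  set f : (Fin n → P) → Finset (Fin n) :=
    fun σ => Finset.univ.filter (fun i => ¬ cK (σ i) ≤ 2 * d) with hf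
  set T : Finset (Finset (Fin n)) :=
    Finset.univ.filter (fun E => 3 * E.card ≤ n) with hT
  set S : Finset (Fin n → P) :=
    Finset.univ.filter (fun σ : Fin n → P => ∑ i, cK (σ i) ≤ (2 * (d : ℝ) / 3) * n) with hS
  have hdR : (0 : ℝ) < d := by exact_mod_cast hd0
  have hfib : ∀ σ ∈ S, f σ ∈ T := by
    intro σ hσ
    simp only [hS, hT, Finset.mem_filter, Finset.mem_univ, true_and] at hσ ⊢
    have h2 : (2 * (d : ℝ)) * (f σ).card ≤ ∑ i, cK (σ i) := by
      calc (2 * (d : ℝ)) * (f σ).card = ∑ _i ∈ f σ, (2 * (d : ℝ)) := by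
            rw [Finset.sum_const, nsmul_eq_mul]; ring
        _ ≤ ∑ i ∈ f σ, cK (σ i) := by
            refine Finset.sum_le_sum fun i hi => ?_
            simp only [hf, Finset.mem_filter, Finset.mem_univ, true_and] at hi
            exact (not_le.mp hi).le
        _ ≤ ∑ i, cK (σ i) :=
            Finset.sum_le_sum_of_subset_of_nonneg (Finset.subset_univ _)
              (fun i _ _ => hcK _)
    have h3 : ((f σ).card : ℝ) ≤ (n : ℝ) / 3 := by
      have h4 : 2 * (d : ℝ) * (f σ).card ≤ 2 * (d : ℝ) * ((n : ℝ) / 3) := by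
        calc 2 * (d : ℝ) * (f σ).card ≤ ∑ i, cK (σ i) := h2
          _ ≤ (2 * (d : ℝ) / 3) * n := hσ
          _ = 2 * (d : ℝ) * ((n : ℝ) / 3) := by ring
      exact le_of_mul_le_mul_left h4 (by positivity)
    have : (3 * (f σ).card : ℝ) ≤ (n : ℝ) := by linarith
    exact_mod_cast this
  have hcount : S.card = ∑ E ∈ T, (S.filter (fun σ => f σ = E)).card :=
    Finset.card_eq_sum_card_fiberwise hfib
  have hfibcard : ∀ E ∈ T, (S.filter (fun σ => f σ = E)).card ≤ b ^ E.card * a ^ (n - E.card) := by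
    intro E _
    have hsub : S.filter (fun σ => f σ = E) ⊆
        Fintype.piFinset (fun i => if i ∈ E then B else G) := by
      intro σ hσ
      simp only [Finset.mem_filter] at hσ
      rw [Fintype.mem_piFinset]
      intro i
      by_cases hiE : i ∈ E
      · rw [if_pos hiE]
        have : i ∈ f σ := hσ.2 ▸ hiE
        simp only [hf, Finset.mem_filter, Finset.mem_univ, true_and] at this
        simp only [hBdef, Finset.mem_filter, Finset.mem_univ, true_and]
        exact this
      · rw [if_neg hiE]
        have : i ∉ f σ := hσ.2 ▸ hiE
        simp only [hf, Finset.mem_filter, Finset.mem_univ, true_and, not_not] at this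
        simp only [hGdef, Finset.mem_filter, Finset.mem_univ, true_and]
        exact this
    calc (S.filter (fun σ => f σ = E)).card
        ≤ (Fintype.piFinset (fun i => if i ∈ E then B else G)).card :=
          Finset.card_le_card hsub
      _ = ∏ i, (if i ∈ E then B else G).card := Fintype.card_piFinset _
      _ = B.card ^ E.card * G.card ^ (n - E.card) := by
          rw [← Finset.prod_sdiff (Finset.subset_univ E)]
          rw [Finset.prod_congr rfl (fun i hi => by
            rw [if_neg (Finset.mem_sdiff.mp hi).2]),
            Finset.prod_congr rfl (fun i (hi : i ∈ E) => by rw [if_pos hi])]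
          rw [Finset.prod_const, Finset.prod_const,
            Finset.card_sdiff_of_subset (Finset.subset_univ E), Finset.card_univ,
            Fintype.card_fin]
          ring
      _ ≤ b ^ E.card * a ^ (n - E.card) :=
          Nat.mul_le_mul (Nat.pow_le_pow_left hBb _) (Nat.pow_le_pow_left hGa _)
  have htermR : ∀ E ∈ T,
      ((b ^ E.card * a ^ (n - E.card) : ℕ) : ℝ)
        ≤ (a : ℝ) ^ n * (b : ℝ) ^ ((n : ℝ) / 3) := by
    intro E hE
    simp only [hT, Finset.mem_filter, Finset.mem_univ, true_and] at hE
    have hEn : ((E.card : ℝ)) ≤ (n : ℝ) / 3 := by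
      have : (3 * E.card : ℝ) ≤ (n : ℝ) := by exact_mod_cast hE
      linarith
    push_cast
    have h1 : (b : ℝ) ^ E.card ≤ (b : ℝ) ^ ((n : ℝ) / 3) := by
      rw [← Real.rpow_natCast (b : ℝ) E.card]
      exact Real.rpow_le_rpow_of_exponent_le hb1R hEn
    have h2 : (a : ℝ) ^ (n - E.card) ≤ (a : ℝ) ^ n :=
      pow_le_pow_right₀ ha1R (Nat.sub_le n _)
    calc (b : ℝ) ^ E.card * (a : ℝ) ^ (n - E.card)
        ≤ (b : ℝ) ^ ((n : ℝ) / 3) * (a : ℝ) ^ n := by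
          apply mul_le_mul h1 h2 (by positivity) (by positivity)
      _ = (a : ℝ) ^ n * (b : ℝ) ^ ((n : ℝ) / 3) := by ring
  have hTcard : T.card ≤ 2 ^ n := by
    calc T.card ≤ (Finset.univ : Finset (Finset (Fin n))).card :=
          Finset.card_le_card (Finset.subset_univ _)
      _ = 2 ^ n := by rw [Finset.card_univ, Fintype.card_finset, Fintype.card_fin]
  -- Part 1
  have part1 : ((S.card : ℝ))
      ≤ (6 * k * d : ℝ) ^ n * ((3 * ((k * d : ℕ) ^ 3) * d : ℝ)) ^ ((n : ℝ) / 3) := by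
    have hbase : ((3 * ((k * d : ℕ) ^ 3) * d : ℝ)) = (b : ℝ) := by push_cast [hb]; ring
    have h6 : (6 * k * d : ℝ) ^ n = (2 : ℝ) ^ n * (a : ℝ) ^ n := by
      rw [← mul_pow]; push_cast [ha]; ring_nf
    rw [hbase, h6]
    calc ((S.card : ℝ)) = ∑ E ∈ T, ((S.filter (fun σ => f σ = E)).card : ℝ) := by
          exact_mod_cast hcount
      _ ≤ ∑ E ∈ T, ((b ^ E.card * a ^ (n - E.card) : ℕ) : ℝ) := by
          refine Finset.sum_le_sum fun E hE => ?_
          exact_mod_cast hfibcard E hE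
      _ ≤ ∑ _E ∈ T, (a : ℝ) ^ n * (b : ℝ) ^ ((n : ℝ) / 3) :=
          Finset.sum_le_sum htermR
      _ = (T.card : ℝ) * ((a : ℝ) ^ n * (b : ℝ) ^ ((n : ℝ) / 3)) := by
          rw [Finset.sum_const, nsmul_eq_mul]
      _ ≤ (2 : ℝ) ^ n * ((a : ℝ) ^ n * (b : ℝ) ^ ((n : ℝ) / 3)) := by
          refine mul_le_mul_of_nonneg_right ?_ (by positivity)
          exact_mod_cast hTcard
      _ = (2 : ℝ) ^ n * (a : ℝ) ^ n * (b : ℝ) ^ ((n : ℝ) / 3) := by ring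
  -- Part 2
  set GA : Finset P := Finset.univ.filter (fun p => cA p ≤ 18) with hGAdef
  set TA : Finset (Fin n → P) :=
    Finset.univ.filter (fun σ : Fin n → P => ∑ i, cA (σ i) ≤ 18 * n) with hTA
  have part2 : ((k * d) ^ 3) ^ n ≤ TA.card := by
    have hsub : Fintype.piFinset (fun _ : Fin n => GA) ⊆ TA := by
      intro σ hσ
      rw [Fintype.mem_piFinset] at hσ
      simp only [hTA, Finset.mem_filter, Finset.mem_univ, true_and]
      calc ∑ i, cA (σ i) ≤ ∑ _i : Fin n, (18 : ℝ) := by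
            refine Finset.sum_le_sum fun i _ => ?_
            have := hσ i
            simp only [hGAdef, Finset.mem_filter, Finset.mem_univ, true_and] at this
            exact this
        _ = 18 * n := by simp [mul_comm]
    calc ((k * d) ^ 3) ^ n ≤ GA.card ^ n := Nat.pow_le_pow_left hA n
      _ = (Fintype.piFinset (fun _ : Fin n => GA)).card := by
          rw [Fintype.card_piFinset]; simp
      _ ≤ TA.card := Finset.card_le_card hsub
  -- key strict numeric inequality
  have key3 : (6 * k * d : ℝ) ^ n * ((3 * ((k * d : ℕ) ^ 3) * d : ℝ)) ^ ((n : ℝ) / 3)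
      < ((((k * d) ^ 3) ^ n : ℕ) : ℝ) := by
    have hx0 : (0 : ℝ) ≤ (6 * k * d : ℝ) := by positivity
    have hnat : (6 * k * d) ^ 3 * (3 * (k * d) ^ 3 * d) < ((k * d) ^ 3) ^ 3 := by
      have hdk : d ≤ k * d := Nat.le_mul_of_pos_left d hk
      have h648 : 648 * d < (k * d) ^ 3 := by
        have h1 : d ^ 3 ≤ (k * d) ^ 3 := Nat.pow_le_pow_left hdk 3
        have h26 : 26 * 26 ≤ d * d := Nat.mul_le_mul hd hd
        have h2 : 648 * d < d ^ 3 := by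
          calc 648 * d < 676 * d := by omega
            _ = (26 * 26) * d := by norm_num
            _ ≤ (d * d) * d := Nat.mul_le_mul_right d h26
            _ = d ^ 3 := by ring
        omega
      calc (6 * k * d) ^ 3 * (3 * (k * d) ^ 3 * d) = (648 * d) * (k * d) ^ 6 := by ring
        _ < (k * d) ^ 3 * (k * d) ^ 6 := by
            have hpos : 0 < (k * d) ^ 6 := Nat.pow_pos hkd1
            exact Nat.mul_lt_mul_of_lt_of_le h648 (le_refl _) hpos
        _ = ((k * d) ^ 3) ^ 3 := by ring
    have hnatR : (6 * k * d : ℝ) ^ 3 * ((3 * ((k * d : ℕ) ^ 3) * d : ℝ))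
        < (((k * d : ℕ) : ℝ) ^ 3) ^ 3 := by exact_mod_cast hnat
    have hn3 : (0 : ℝ) < (n : ℝ) / 3 := by
      have : (1 : ℝ) ≤ n := by exact_mod_cast hn
      linarith
    have hrw : ∀ x : ℝ, 0 ≤ x → (x ^ 3) ^ ((n : ℝ) / 3) = x ^ n := by
      intro x hx
      have h3 : (x ^ 3 : ℝ) = x ^ ((3 : ℝ)) := by
        rw [← Real.rpow_natCast x 3]; norm_num
      rw [h3, ← Real.rpow_mul hx,
        show (3 : ℝ) * ((n : ℝ) / 3) = ((n : ℕ) : ℝ) by ring,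
        Real.rpow_natCast]
    have hy0 : (0 : ℝ) ≤ (3 * ((k * d : ℕ) ^ 3) * d : ℝ) := by positivity
    calc (6 * k * d : ℝ) ^ n * ((3 * ((k * d : ℕ) ^ 3) * d : ℝ)) ^ ((n : ℝ) / 3)
        = ((6 * k * d : ℝ) ^ 3) ^ ((n : ℝ) / 3)
            * ((3 * ((k * d : ℕ) ^ 3) * d : ℝ)) ^ ((n : ℝ) / 3) := by
          rw [hrw _ hx0]
      _ = ((6 * k * d : ℝ) ^ 3 * (3 * ((k * d : ℕ) ^ 3) * d : ℝ)) ^ ((n : ℝ) / 3) := by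
          rw [← Real.mul_rpow (by positivity) hy0]
      _ < ((((k * d : ℕ) : ℝ) ^ 3) ^ 3) ^ ((n : ℝ) / 3) :=
          Real.rpow_lt_rpow (by positivity) hnatR hn3
      _ = (((k * d : ℕ) : ℝ) ^ 3) ^ n := hrw _ (by positivity)
      _ = ((((k * d) ^ 3) ^ n : ℕ) : ℝ) := by push_cast; ring
  -- Part 3
  set S' : Finset (Fin n → P) :=
    Finset.univ.filter (fun σ : Fin n → P => ∑ i, cK (σ i) < (2 * (d : ℝ) / 3) * n) with hS'
  have part3 : S'.card < TA.card := by
    have hsub : S' ⊆ S := by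
      intro σ hσ
      simp only [hS', hS, Finset.mem_filter, Finset.mem_univ, true_and] at hσ ⊢
      exact hσ.le
    have hR : ((S'.card : ℕ) : ℝ) < ((TA.card : ℕ) : ℝ) := by
      calc ((S'.card : ℕ) : ℝ) ≤ (S.card : ℝ) := by
            exact_mod_cast Finset.card_le_card hsub
        _ ≤ (6 * k * d : ℝ) ^ n * ((3 * ((k * d : ℕ) ^ 3) * d : ℝ)) ^ ((n : ℝ) / 3) := part1
        _ < ((((k * d) ^ 3) ^ n : ℕ) : ℝ) := key3
        _ ≤ ((TA.card : ℕ) : ℝ) := by exact_mod_cast part2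
    exact_mod_cast hR
  refine ⟨part1, part2, part3, ?_⟩
  -- Part 4
  intro π
  have hcardπ : (Finset.univ.filter
      (fun σ : Fin n → P => ∑ i, cA (π σ i) ≤ 18 * n)).card = TA.card := by
    refine Finset.card_equiv π (fun σ => ?_)
    simp [hTA]
  have hlt : S'.card < (Finset.univ.filter
      (fun σ : Fin n → P => ∑ i, cA (π σ i) ≤ 18 * n)).card := by
    rw [hcardπ]; exact part3
  obtain ⟨σ, hσmem, hσnot⟩ := exists_mem_not_mem_aux hlt
  simp only [Finset.mem_filter, Finset.mem_univ, true_and] at hσmem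
  simp only [hS', Finset.mem_filter, Finset.mem_univ, true_and, not_lt] at hσnot
  refine ⟨σ, ?_⟩
  have h1 : ((d : ℝ) / 27) * (∑ i, cA (π σ i)) ≤ ((d : ℝ) / 27) * (18 * n) :=
    mul_le_mul_of_nonneg_left hσmem (by positivity)
  calc ((d : ℝ) / 27) * (∑ i, cA (π σ i)) ≤ ((d : ℝ) / 27) * (18 * n) := h1
    _ = (2 * (d : ℝ) / 3) * n := by ring
    _ ≤ ∑ i, cK (σ i) := hσnot
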